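/- Define y(p,q) = ln((1−q)/(1−p)) / ln(p/q) for p, q ∈ (0,1) with p ≠ q. Fix q ∈ (0,1). Then for all p₁, p₂ ∈ (0,1) with p₁ < p₂, p₁ ≠ q, and p₂ ≠ q, one has y(p₁,q) < y(p₂,q); that is, p ↦ y(p,q) is strictly increasing on (0,1) \ {q}. In particular, if p₁ ≠ p₂ and both differ from q, then y(p₁,q) ≠ y(p₂,q). -/

import Mathlib

/-- `y(p,q) = ln((1−q)/(1−p)) / ln(p/q)`. -/
noncomputable def yval (p q : ℝ) : ℝ :=
  Real.log ((1 - q) / (1 - p)) / Real.log (p / q)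

/-- The auxiliary function `φ(u) = -log(1 - exp u)`. -/
noncomputable def phiAux (u : ℝ) : ℝ := -Real.log (1 - Real.exp u)

lemma phiAux_hasDerivAt {u : ℝ} (hu : u < 0) :
    HasDerivAt phiAux (Real.exp u / (1 - Real.exp u)) u := by
  have h1 : Real.exp u < 1 := by simpa using Real.exp_lt_one_iff.mpr hu
  have h2 : (1 : ℝ) - Real.exp u ≠ 0 := by linarith
  have hd : HasDerivAt (fun u => 1 - Real.exp u) (-Real.exp u) u := by
    simpa using ((Real.hasDerivAt_exp u).const_sub 1)
  have := (hd.log h2).neg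
  have e : phiAux = -fun y => Real.log (1 - Real.exp y) := by funext x; simp [phiAux]
  rw [e, show Real.exp u / (1 - Real.exp u) = -(-Real.exp u / (1 - Real.exp u)) by ring]
  exact this

lemma phiAux_strictConvexOn : StrictConvexOn ℝ (Set.Iio (0 : ℝ)) phiAux := by
  apply StrictMonoOn.strictConvexOn_of_deriv (convex_Iio 0)
  · intro u hu
    exact (phiAux_hasDerivAt hu).continuousAt.continuousWithinAt
  · rw [interior_Iio]
    intro a ha b hb hab
    rw [(phiAux_hasDerivAt ha).deriv, (phiAux_hasDerivAt hb).deriv]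
    have ha1 : Real.exp a < 1 := by simpa using Real.exp_lt_one_iff.mpr ha
    have hb1 : Real.exp b < 1 := by simpa using Real.exp_lt_one_iff.mpr hb
    have hab' : Real.exp a < Real.exp b := Real.exp_lt_exp.mpr hab
    have hpa : (0 : ℝ) < Real.exp a := Real.exp_pos a
    rw [div_lt_div_iff₀ (by linarith) (by linarith)]
    nlinarith

lemma yval_eq_slope {p q : ℝ} (hp : p ∈ Set.Ioo (0 : ℝ) 1) (hq : q ∈ Set.Ioo (0 : ℝ) 1) :
    yval p q = (phiAux (Real.log p) - phiAux (Real.log q)) / (Real.log p - Real.log q) := by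
  obtain ⟨hp0, hp1⟩ := hp
  obtain ⟨hq0, hq1⟩ := hq
  have e1 : Real.exp (Real.log p) = p := Real.exp_log hp0
  have e2 : Real.exp (Real.log q) = q := Real.exp_log hq0
  rw [yval, phiAux, phiAux, e1, e2,
    Real.log_div (by linarith) (by linarith), Real.log_div (ne_of_gt hp0) (ne_of_gt hq0)]
  ring

theorem stmt7 (q : ℝ) (hq : q ∈ Set.Ioo (0 : ℝ) 1) :
    (∀ p₁ p₂ : ℝ, p₁ ∈ Set.Ioo (0 : ℝ) 1 → p₂ ∈ Set.Ioo (0 : ℝ) 1 →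
      p₁ < p₂ → p₁ ≠ q → p₂ ≠ q → yval p₁ q < yval p₂ q) ∧
    (∀ p₁ p₂ : ℝ, p₁ ∈ Set.Ioo (0 : ℝ) 1 → p₂ ∈ Set.Ioo (0 : ℝ) 1 →
      p₁ ≠ p₂ → p₁ ≠ q → p₂ ≠ q → yval p₁ q ≠ yval p₂ q) := by
  have key : ∀ p₁ p₂ : ℝ, p₁ ∈ Set.Ioo (0 : ℝ) 1 → p₂ ∈ Set.Ioo (0 : ℝ) 1 →
      p₁ < p₂ → p₁ ≠ q → p₂ ≠ q → yval p₁ q < yval p₂ q := by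
    intro p₁ p₂ hp₁ hp₂ hlt h1q h2q
    rw [yval_eq_slope hp₁ hq, yval_eq_slope hp₂ hq]
    have l1 : Real.log p₁ ∈ Set.Iio (0 : ℝ) := Real.log_neg hp₁.1 hp₁.2
    have l2 : Real.log p₂ ∈ Set.Iio (0 : ℝ) := Real.log_neg hp₂.1 hp₂.2
    have lq : Real.log q ∈ Set.Iio (0 : ℝ) := Real.log_neg hq.1 hq.2
    exact phiAux_strictConvexOn.secant_strict_mono lq l1 l2
      (fun h => h1q (Real.log_injOn_pos (Set.mem_Ioi.mpr hp₁.1) (Set.mem_Ioi.mpr hq.1) h))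
      (fun h => h2q (Real.log_injOn_pos (Set.mem_Ioi.mpr hp₂.1) (Set.mem_Ioi.mpr hq.1) h))
      (Real.log_lt_log hp₁.1 hlt)
  refine ⟨key, ?_⟩
  intro p₁ p₂ hp₁ hp₂ hne h1q h2q
  rcases hne.lt_or_gt with h | h
  · exact ne_of_lt (key p₁ p₂ hp₁ hp₂ h h1q h2q)
  · exact (ne_of_lt (key p₂ p₁ hp₂ hp₁ h h2q h1q)).symm
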